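/- Let Q be a finite qubit set and G ≤ V(Q) a subspace with k logical qubits (2k = dim C(G) − dim(G ∩ C(G))). Extend the qubit set to Q' = Q ∪ {a} where a is a fresh ancillary qubit, and regard vectors of V(Q) as vectors of V(Q') vanishing at a. Fix q ∈ Q and let G' = span(G ∪ {X_q + X_a, Z_a}) ≤ V(Q'). Then: (i) G' has the same number k of logical qubits, i.e. dim C(G') − dim(G' ∩ C(G')) = 2k; (ii) if k ≥ 1, the distance of G' equals the distance of G, i.e. the minimum weight of an element of C(S') \ G' (with S' = G' ∩ C(G')) equals the minimum weight of an element of C(S) \ G (with S = G ∩ C(G)). -/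

import Mathlib

set_option linter.unusedSectionVars false

open Finset Matrix

abbrev F2 : Type := ZMod 2

abbrev PauliSpace (Q : Type) := Q → F2 × F2

section Pauli

variable {Q : Type} [Fintype Q] [DecidableEq Q]

/-- Support of a Pauli vector. -/
def psupp (v : PauliSpace Q) : Finset Q := Finset.univ.filter (fun q => v q ≠ (0, 0))

/-- Weight of a Pauli vector. -/
def pwt (v : PauliSpace Q) : ℕ := (psupp v).card

/-- The symplectic form. -/
def omegaF (u v : PauliSpace Q) : F2 :=
  ∑ q, ((u q).1 * (v q).2 + (u q).2 * (v q).1)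

lemma omegaF_add_left (u v w : PauliSpace Q) :
    omegaF (u + v) w = omegaF u w + omegaF v w := by
  simp only [omegaF, Pi.add_apply, Prod.fst_add, Prod.snd_add, ← Finset.sum_add_distrib]
  exact Finset.sum_congr rfl (fun q _ => by ring)

lemma omegaF_smul_left (c : F2) (u w : PauliSpace Q) :
    omegaF (c • u) w = c * omegaF u w := by
  simp only [omegaF, Pi.smul_apply, Prod.smul_fst, Prod.smul_snd, smul_eq_mul,
    Finset.mul_sum]
  exact Finset.sum_congr rfl (fun q _ => by ring)

/-- Centralizer of a subspace w.r.t. the symplectic form. -/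
def pcent (G : Submodule F2 (PauliSpace Q)) : Submodule F2 (PauliSpace Q) where
  carrier := {v | ∀ g ∈ G, omegaF v g = 0}
  zero_mem' := by
    intro g _
    simp [omegaF]
  add_mem' := by
    intro a b ha hb g hg
    rw [omegaF_add_left, ha g hg, hb g hg, add_zero]
  smul_mem' := by
    intro c a ha g hg
    rw [omegaF_smul_left, ha g hg, mul_zero]

/-- Stabilizer group of a gauge group. -/
def pstab (G : Submodule F2 (PauliSpace Q)) : Submodule F2 (PauliSpace Q) := G ⊓ pcent G

/-- Single-qubit Pauli X vector. -/
def Xop (c : Q) : PauliSpace Q := fun q => if q = c then (1, 0) else (0, 0)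

/-- Single-qubit Pauli Z vector. -/
def Zop (c : Q) : PauliSpace Q := fun q => if q = c then (0, 1) else (0, 0)

/-- The set of weights of dressed logical operators; its infimum is the distance. -/
def distSet (G : Submodule F2 (PauliSpace Q)) : Set ℕ :=
  {w | ∃ v, v ∈ pcent (pstab G) ∧ v ∉ G ∧ pwt v = w}

/-- Pauli vectors supported in `M`. -/
def PMod (M : Finset Q) : Submodule F2 (PauliSpace Q) where
  carrier := {v | ∀ q, q ∉ M → v q = 0}
  zero_mem' := by intro q _; rfl
  add_mem' := by
    intro a b ha hb q hq
    simp [Pi.add_apply, ha q hq, hb q hq]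
  smul_mem' := by
    intro c a ha q hq
    simp [Pi.smul_apply, ha q hq]

/-- Projection onto the qubits in `M`. -/
def projL (M : Finset Q) : PauliSpace Q →ₗ[F2] PauliSpace Q where
  toFun v := fun q => if q ∈ M then v q else 0
  map_add' a b := by funext q; by_cases h : q ∈ M <;> simp [h]
  map_smul' c a := by funext q; by_cases h : q ∈ M <;> simp [h]

/-- Number of independent dressed logical operators supported in `M`. -/
noncomputable def lM (G : Submodule F2 (PauliSpace Q)) (M : Finset Q) : ℕ :=
  Module.finrank F2 ↥(pcent ((pstab G).map (projL M)) ⊓ PMod M)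
    - Module.finrank F2 ↥(G ⊓ PMod M)

/-- Number of independent bare logical operators supported in `M`. -/
noncomputable def lbareM (G : Submodule F2 (PauliSpace Q)) (M : Finset Q) : ℕ :=
  Module.finrank F2 ↥(pcent (G.map (projL M)) ⊓ PMod M)
    - Module.finrank F2 ↥(pstab G ⊓ PMod M)

end Pauli

section Classical

variable {ι : Type} [Fintype ι] [DecidableEq ι]

/-- Hamming weight of a classical vector. -/
def hwt (v : ι → F2) : ℕ := (Finset.univ.filter (fun i => v i ≠ 0)).card

/-- Row space of a matrix. -/
def Crow (A : Matrix ι ι F2) : Submodule F2 (ι → F2) := Submodule.span F2 (Set.range A)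

/-- Column space of a matrix. -/
def Ccol (A : Matrix ι ι F2) : Submodule F2 (ι → F2) := Submodule.span F2 (Set.range Aᵀ)

/-- Minimum distance of the row space. -/
noncomputable def drow (A : Matrix ι ι F2) : ℕ := sInf {w | ∃ v ∈ Crow A, v ≠ 0 ∧ hwt v = w}

/-- Minimum distance of the column space. -/
noncomputable def dcol (A : Matrix ι ι F2) : ℕ := sInf {w | ∃ v ∈ Ccol A, v ≠ 0 ∧ hwt v = w}

/-- Number of nonzero entries of a matrix. -/
def nnz (A : Matrix ι ι F2) : ℕ :=
  (Finset.univ.filter (fun p : ι × ι => A p.1 p.2 ≠ 0)).card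

end Classical

section BaconShor

variable {m : ℕ}

/-- Qubit set of the generalized Bacon-Shor code: cells with `A i j = 1`. -/
abbrev QA (A : Matrix (Fin m) (Fin m) F2) : Type := {c : Fin m × Fin m // A c.1 c.2 = 1}

/-- Generators of the gauge group. -/
def gaugeSet (A : Matrix (Fin m) (Fin m) F2) : Set (PauliSpace (QA A)) :=
  {v | ∃ c c' : QA A, c ≠ c' ∧
    ((c.1.1 = c'.1.1 ∧ v = Xop c + Xop c') ∨ (c.1.2 = c'.1.2 ∧ v = Zop c + Zop c'))}

/-- Gauge group of the generalized Bacon-Shor code. -/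
def gaugeBS (A : Matrix (Fin m) (Fin m) F2) : Submodule F2 (PauliSpace (QA A)) :=
  Submodule.span F2 (gaugeSet A)

/-- The row operator `R i`. -/
def Rop (A : Matrix (Fin m) (Fin m) F2) (i : Fin m) : PauliSpace (QA A) :=
  ∑ c ∈ Finset.univ.filter (fun c : QA A => c.1.1 = i), Zop c

/-- The column operator `C j`. -/
def Cop (A : Matrix (Fin m) (Fin m) F2) (j : Fin m) : PauliSpace (QA A) :=
  ∑ c ∈ Finset.univ.filter (fun c : QA A => c.1.2 = j), Xop c

/-- X-type operator parameterized by a binary vector. -/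
def PXop (A : Matrix (Fin m) (Fin m) F2) (x : Fin m → F2) : PauliSpace (QA A) :=
  ∑ j, x j • Cop A j

/-- Z-type operator parameterized by a binary vector. -/
def PZop (A : Matrix (Fin m) (Fin m) F2) (z : Fin m → F2) : PauliSpace (QA A) :=
  ∑ i, z i • Rop A i

end BaconShor

/-- Binary entropy. -/
noncomputable def H2 (p : ℝ) : ℝ := -p * Real.logb 2 p - (1 - p) * Real.logb 2 (1 - p)
/-- Extension of a Pauli vector on `Q` to `Q ∪ {a}` (the ancilla is `none`), by zero. -/
def extendL (Q : Type) [Fintype Q] [DecidableEq Q] :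
    PauliSpace Q →ₗ[F2] PauliSpace (Option Q) where
  toFun v q := q.elim (0, 0) v
  map_add' a b := by funext q; cases q <;> simp
  map_smul' c a := by funext q; cases q <;> simp

section Helpers

variable {Q : Type} [Fintype Q] [DecidableEq Q]

lemma F2_cases (c : F2) : c = 0 ∨ c = 1 := by revert c; decide

lemma P2_add_add_cancel (x y : F2 × F2) : x + y + y = x := by revert x y; decide

lemma F2_add_eq_zero_iff (a b : F2) : a + b = 0 ↔ a = b := by revert a b; decide

lemma omegaF_comm (u v : PauliSpace Q) : omegaF u v = omegaF v u :=
  Finset.sum_congr rfl fun q _ => by ring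

lemma omegaF_add_right (u v w : PauliSpace Q) :
    omegaF u (v + w) = omegaF u v + omegaF u w := by
  rw [omegaF_comm, omegaF_add_left, omegaF_comm v, omegaF_comm w]

lemma omegaF_smul_right (c : F2) (u w : PauliSpace Q) :
    omegaF u (c • w) = c * omegaF u w := by
  rw [omegaF_comm, omegaF_smul_left, omegaF_comm]

lemma omegaF_Xop (v : PauliSpace Q) (c : Q) : omegaF v (Xop c) = (v c).2 := by
  rw [omegaF, Finset.sum_eq_single c]
  · simp [Xop]
  · intro b _ hb; simp [Xop, hb]
  · intro h; exact absurd (Finset.mem_univ c) h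

lemma omegaF_Zop (v : PauliSpace Q) (c : Q) : omegaF v (Zop c) = (v c).1 := by
  rw [omegaF, Finset.sum_eq_single c]
  · simp [Zop]
  · intro b _ hb; simp [Zop, hb]
  · intro h; exact absurd (Finset.mem_univ c) h

lemma mem_pcent_span_iff (s : Set (PauliSpace Q)) (v : PauliSpace Q) :
    v ∈ pcent (Submodule.span F2 s) ↔ ∀ x ∈ s, omegaF v x = 0 := by
  constructor
  · intro h x hx; exact h x (Submodule.subset_span hx)
  · intro h g hg
    induction hg using Submodule.span_induction with
    | mem x hx => exact h x hx
    | zero => simp [omegaF]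
    | add x y _ _ hx hy => rw [omegaF_add_right, hx, hy, add_zero]
    | smul c x _ hx => rw [omegaF_smul_right, hx, mul_zero]

/-- Restriction to the original qubits. -/
def resL : PauliSpace (Option Q) →ₗ[F2] PauliSpace Q where
  toFun v := fun q => v (some q)
  map_add' a b := rfl
  map_smul' c a := rfl

lemma res_extend (v : PauliSpace Q) : resL (extendL Q v) = v := rfl

/-- The section of `resL` used to describe centralizers of the extended code. -/
def phiL (q : Q) : PauliSpace Q →ₗ[F2] PauliSpace (Option Q) where
  toFun v := extendL Q v + (v q).2 • Zop none
  map_add' a b := by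
    simp only [map_add, Pi.add_apply, Prod.snd_add, add_smul]; abel
  map_smul' c a := by
    simp only [LinearMap.map_smul, Pi.smul_apply, Prod.smul_snd, RingHom.id_apply,
      smul_eq_mul, mul_smul, smul_add]

lemma res_phi (q : Q) (v : PauliSpace Q) : resL (phiL q v) = v := by
  funext q'
  simp [resL, phiL, extendL, Zop]

lemma phi_inj (q : Q) : Function.Injective (phiL q : PauliSpace Q →ₗ[F2] _) := by
  intro a b h
  rw [← res_phi q a, ← res_phi q b, h]

lemma phi_none (q : Q) (v : PauliSpace Q) : phiL q v none = (0, (v q).2) := by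
  rcases F2_cases (v q).2 with h | h <;> simp [phiL, extendL, Zop, h, Prod.ext_iff]

lemma phi_some (q : Q) (v : PauliSpace Q) (q' : Q) : phiL q v (some q') = v q' := by
  simp [phiL, extendL, Zop]

/-- The "gauge fixing" linear map. -/
def TL (q : Q) : PauliSpace (Option Q) →ₗ[F2] PauliSpace Q where
  toFun v := resL v + (v none).1 • Xop q
  map_add' a b := by
    simp only [map_add, Pi.add_apply, Prod.fst_add, add_smul]; abel
  map_smul' c a := by
    simp only [LinearMap.map_smul, Pi.smul_apply, Prod.smul_fst, RingHom.id_apply,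
      smul_eq_mul, mul_smul, smul_add]

lemma T_extend (q : Q) (v : PauliSpace Q) : TL q (extendL Q v) = v := by
  have : ((extendL Q v) none).1 = 0 := rfl
  simp [TL, this, res_extend]

lemma T_phi (q : Q) (v : PauliSpace Q) : TL q (phiL q v) = v := by
  have h := phi_none q v
  simp [TL, h, res_phi]

end Helpers
section Helpers2

variable {Q : Type} [Fintype Q] [DecidableEq Q]

lemma P2_add_self (x : F2 × F2) : x + x = 0 := by revert x; decide

lemma omegaF_extend (v' : PauliSpace (Option Q)) (g : PauliSpace Q) :
    omegaF v' (extendL Q g) = omegaF (resL v') g := by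
  rw [omegaF, omegaF, Fintype.sum_option]
  simp [extendL, resL]

lemma T_u (q : Q) : TL q (Xop (some q) + Xop (none : Option Q)) = 0 := by
  have h1 : resL (Xop (some q) + Xop (none : Option Q)) = Xop q := by
    funext q'; simp [resL, Xop]
  have h2 : ((Xop (some q) + Xop (none : Option Q)) none).1 = 1 := by
    simp [Xop]
  show resL _ + _ • Xop q = 0
  rw [h1, h2, one_smul]
  funext q'; exact P2_add_self _

lemma T_z (q : Q) : TL q (Zop (none : Option Q)) = 0 := by
  have h1 : resL (Zop (none : Option Q)) = 0 := by
    funext q'; simp [resL, Zop]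
  have h2 : ((Zop (none : Option Q)) none).1 = 0 := by simp [Zop]
  show resL _ + _ • Xop q = 0
  rw [h1, h2, zero_smul, add_zero]

lemma key_decomp (q : Q) (v' : PauliSpace (Option Q)) :
    v' = extendL Q (TL q v') + (v' none).1 • (Xop (some q) + Xop none)
      + (v' none).2 • Zop none := by
  funext o
  cases o with
  | none =>
    simp only [Pi.add_apply, Pi.smul_apply]
    have e0 : extendL Q (TL q v') none = 0 := rfl
    have e1 : Xop (some q) (none : Option Q) = (0 : F2 × F2) := by simp [Xop]
    have e2 : Xop (none : Option Q) none = ((1, 0) : F2 × F2) := by simp [Xop]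
    have e3 : Zop (none : Option Q) none = ((0, 1) : F2 × F2) := by simp [Zop]
    rw [e0, e1, e2, e3, zero_add, zero_add]
    refine Prod.ext ?_ ?_ <;> simp
  | some q' =>
    simp only [Pi.add_apply, Pi.smul_apply]
    have e0 : extendL Q (TL q v') (some q') = v' (some q') + (v' none).1 • Xop q q' := rfl
    have e1 : Xop (some q) (some q') = Xop q q' := by simp [Xop]
    have e2 : Xop (none : Option Q) (some q') = (0 : F2 × F2) := by simp [Xop]
    have e3 : Zop (none : Option Q) (some q') = (0 : F2 × F2) := by simp [Zop]
    rw [e0, e1, e2, e3, add_zero, smul_zero, add_zero]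
    exact (P2_add_add_cancel _ _).symm

lemma mem_Gext_iff (G : Submodule F2 (PauliSpace Q)) (q : Q) (v' : PauliSpace (Option Q)) :
    v' ∈ Submodule.span F2
      ((extendL Q '' (G : Set (PauliSpace Q))) ∪ {Xop (some q) + Xop none, Zop none})
    ↔ TL q v' ∈ G := by
  constructor
  · intro h
    have hle : Submodule.span F2
        ((extendL Q '' (G : Set (PauliSpace Q))) ∪ {Xop (some q) + Xop none, Zop none})
        ≤ Submodule.comap (TL q) G := by
      rw [Submodule.span_le]
      rintro x (⟨g, hg, rfl⟩ | hx)
      · simpa [Submodule.mem_comap, T_extend] using hg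
      · rcases hx with rfl | rfl
        · simp [Submodule.mem_comap, T_u]
        · simp [Submodule.mem_comap, T_z]
    exact hle h
  · intro h
    rw [key_decomp q v']
    refine Submodule.add_mem _ (Submodule.add_mem _ ?_ ?_) ?_
    · exact Submodule.subset_span (Or.inl ⟨_, h, rfl⟩)
    · exact Submodule.smul_mem _ _
        (Submodule.subset_span (Or.inr (Set.mem_insert _ _)))
    · exact Submodule.smul_mem _ _
        (Submodule.subset_span (Or.inr (Set.mem_insert_of_mem _ rfl)))

lemma mem_centGext_iff (G : Submodule F2 (PauliSpace Q)) (q : Q)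
    (v' : PauliSpace (Option Q)) :
    v' ∈ pcent (Submodule.span F2
        ((extendL Q '' (G : Set (PauliSpace Q))) ∪ {Xop (some q) + Xop none, Zop none}))
    ↔ resL v' ∈ pcent G ∧ (v' none).1 = 0 ∧ (v' none).2 = (v' (some q)).2 := by
  rw [mem_pcent_span_iff]
  constructor
  · intro h
    refine ⟨fun g hg => ?_, ?_, ?_⟩
    · have := h (extendL Q g) (Or.inl ⟨g, hg, rfl⟩)
      rwa [omegaF_extend] at this
    · have := h (Zop none) (Or.inr (Set.mem_insert_of_mem _ rfl))
      rwa [omegaF_Zop] at this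
    · have := h (Xop (some q) + Xop none) (Or.inr (Set.mem_insert _ _))
      rw [omegaF_add_right, omegaF_Xop, omegaF_Xop, F2_add_eq_zero_iff] at this
      exact this.symm
  · rintro ⟨h1, h2, h3⟩ x hx
    rcases hx with ⟨g, hg, rfl⟩ | hx
    · rw [omegaF_extend]; exact h1 g hg
    · rcases hx with rfl | rfl
      · rw [omegaF_add_right, omegaF_Xop, omegaF_Xop, F2_add_eq_zero_iff]
        exact h3.symm
      · rw [omegaF_Zop]; exact h2

end Helpers2
section Helpers3

variable {Q : Type} [Fintype Q] [DecidableEq Q]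

lemma phi_res (q : Q) (v' : PauliSpace (Option Q))
    (h2 : (v' none).1 = 0) (h3 : (v' none).2 = (v' (some q)).2) :
    phiL q (resL v') = v' := by
  funext o
  cases o with
  | none =>
    have hv : v' none = ((v' none).1, (v' none).2) := rfl
    rw [phi_none, hv, h2, h3]
    rfl
  | some q' => rw [phi_some]; rfl

lemma centGext_eq (G : Submodule F2 (PauliSpace Q)) (q : Q) :
    pcent (Submodule.span F2
        ((extendL Q '' (G : Set (PauliSpace Q))) ∪ {Xop (some q) + Xop none, Zop none}))
      = (pcent G).map (phiL q) := by
  ext v'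
  rw [mem_centGext_iff, Submodule.mem_map]
  constructor
  · rintro ⟨h1, h2, h3⟩
    exact ⟨resL v', h1, phi_res q v' h2 h3⟩
  · rintro ⟨s, hs, rfl⟩
    refine ⟨by rwa [res_phi], ?_, ?_⟩
    · rw [phi_none]
    · rw [phi_none, phi_some]

lemma stabGext_eq (G : Submodule F2 (PauliSpace Q)) (q : Q) :
    pstab (Submodule.span F2
        ((extendL Q '' (G : Set (PauliSpace Q))) ∪ {Xop (some q) + Xop none, Zop none}))
      = (pstab G).map (phiL q) := by
  ext v'
  rw [pstab, Submodule.mem_inf, mem_Gext_iff, mem_centGext_iff, Submodule.mem_map]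
  constructor
  · rintro ⟨hg, h1, h2, h3⟩
    have hT : TL q v' = resL v' := by
      show resL v' + _ • Xop q = _
      rw [h2, zero_smul, add_zero]
    rw [hT] at hg
    exact ⟨resL v', Submodule.mem_inf.mpr ⟨hg, h1⟩, phi_res q v' h2 h3⟩
  · rintro ⟨s, hs, rfl⟩
    obtain ⟨hsG, hsC⟩ := Submodule.mem_inf.mp hs
    refine ⟨by rw [T_phi]; exact hsG, by rwa [res_phi], ?_, ?_⟩
    · rw [phi_none]
    · rw [phi_none, phi_some]

set_option maxHeartbeats 1000000 in
lemma mem_pcent_map_phi (S : Submodule F2 (PauliSpace Q)) (q : Q)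
    (v' : PauliSpace (Option Q)) :
    v' ∈ pcent (S.map (phiL q)) ↔
      ∀ s ∈ S, omegaF (resL v') s + (s q).2 * (v' none).1 = 0 := by
  have key : ∀ s : PauliSpace Q,
      omegaF v' (phiL q s) = omegaF (resL v') s + (s q).2 * (v' none).1 := by
    intro s
    have hphi : phiL q s = extendL Q s + (s q).2 • Zop none := rfl
    rw [hphi, omegaF_add_right, omegaF_extend, omegaF_smul_right, omegaF_Zop]
  constructor
  · intro h s hs
    rw [← key]
    exact h _ (Submodule.mem_map_of_mem hs)
  · rintro h g ⟨s, hs, rfl⟩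
    rw [key]
    exact h s hs

lemma pwt_extend (v : PauliSpace Q) : pwt (extendL Q v) = pwt v := by
  have hsupp : psupp (extendL Q v) = (psupp v).map ⟨some, Option.some_injective Q⟩ := by
    ext o
    cases o with
    | none =>
      simp only [psupp, Finset.mem_filter, Finset.mem_univ, true_and, Finset.mem_map,
        Function.Embedding.coeFn_mk]
      constructor
      · intro hc; exact absurd rfl hc
      · rintro ⟨a, _, hh⟩; exact absurd hh (by simp)
    | some q' =>
      simp only [psupp, Finset.mem_filter, Finset.mem_univ, true_and, Finset.mem_map,
        Function.Embedding.coeFn_mk]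
      constructor
      · intro hc; exact ⟨q', hc, rfl⟩
      · rintro ⟨a, ha, hq⟩; cases Option.some_injective Q hq; exact ha
  rw [pwt, hsupp, Finset.card_map, pwt]

lemma pwt_T_le (q : Q) (v' : PauliSpace (Option Q)) : pwt (TL q v') ≤ pwt v' := by
  rcases F2_cases (v' none).1 with h | h
  · have hT : TL q v' = resL v' := by
      show resL v' + _ • Xop q = _
      rw [h, zero_smul, add_zero]
    rw [hT, pwt, pwt]
    apply Finset.card_le_card_of_injOn some
    · intro q' hq'
      simp only [psupp, Finset.mem_coe, Finset.mem_filter, Finset.mem_univ, true_and] at hq' ⊢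
      exact hq'
    · exact (Option.some_injective Q).injOn
  · rw [pwt, pwt]
    apply Finset.card_le_card_of_injOn (fun q' => if q' = q then none else some q')
    · intro q' hq'
      simp only [psupp, Finset.mem_coe, Finset.mem_filter, Finset.mem_univ, true_and] at hq' ⊢
      by_cases hqq : q' = q
      · rw [if_pos hqq]
        intro hc
        rw [hc] at h
        exact absurd h (by decide)
      · rw [if_neg hqq]
        intro hc
        apply hq'
        have hTe : TL q v' q' = v' (some q') + (v' none).1 • Xop q q' := rfl
        have hX : Xop q q' = (0 : F2 × F2) := by simp [Xop, hqq]
        rw [hTe, hc, hX, smul_zero, add_zero]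
    · intro a _ b _ hab
      dsimp only at hab
      by_cases ha : a = q <;> by_cases hb : b = q
      · rw [ha, hb]
      · rw [if_pos ha, if_neg hb] at hab; exact absurd hab (by simp)
      · rw [if_neg ha, if_pos hb] at hab; exact absurd hab (by simp)
      · rw [if_neg ha, if_neg hb] at hab; exact Option.some_injective Q hab

end Helpers3

/-- Lemma 1 of the paper: adjoining an ancillary qubit `a` and the gauge generators
`X_q X_a` and `Z_a` preserves both the number of logical qubits and the distance. -/
theorem ancilla_extension_same_parameters {Q : Type} [Fintype Q] [DecidableEq Q]
    (G : Submodule F2 (PauliSpace Q)) (k : ℕ)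
    (hk : Module.finrank F2 ↥(pcent G) = Module.finrank F2 ↥(pstab G) + 2 * k)
    (q : Q)
    (G' : Submodule F2 (PauliSpace (Option Q)))
    (hG' : G' = Submodule.span F2
      ((extendL Q '' (G : Set (PauliSpace Q))) ∪
        {Xop (some q) + Xop none, Zop none})) :
    Module.finrank F2 ↥(pcent G') = Module.finrank F2 ↥(pstab G') + 2 * k ∧
    (1 ≤ k → sInf (distSet G') = sInf (distSet G)) := by
  subst hG'
  constructor
  · rw [centGext_eq G q, stabGext_eq G q,
      LinearEquiv.finrank_eq (Submodule.equivMapOfInjective (phiL q) (phi_inj q) (pcent G)).symm,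
      LinearEquiv.finrank_eq (Submodule.equivMapOfInjective (phiL q) (phi_inj q) (pstab G)).symm,
      hk]
  · intro hk1
    -- distSet G is nonempty
    have hex : ∃ v, v ∈ pcent (pstab G) ∧ v ∉ G := by
      by_contra hcon
      push_neg at hcon
      have hle1 : pcent (pstab G) ≤ G := fun v hv => hcon v hv
      have hle2 : pcent G ≤ pcent (pstab G) := by
        intro v hv s hs
        exact hv s (Submodule.mem_inf.mp hs).1
      have hle3 : pcent G ≤ pstab G := le_inf (le_trans hle2 hle1) le_rfl
      have heq : pcent G = pstab G := le_antisymm hle3 inf_le_right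
      rw [heq] at hk
      omega
    obtain ⟨v0, hv0c, hv0g⟩ := hex
    have hfwd : ∀ w ∈ distSet G, w ∈ distSet (Submodule.span F2
        ((extendL Q '' (G : Set (PauliSpace Q))) ∪ {Xop (some q) + Xop none, Zop none})) := by
      rintro w ⟨v, hvc, hvg, rfl⟩
      refine ⟨extendL Q v, ?_, ?_, pwt_extend v⟩
      · rw [stabGext_eq, mem_pcent_map_phi]
        intro s hs
        have h0 : ((extendL Q v) none).1 = 0 := rfl
        rw [h0, mul_zero, add_zero, res_extend]
        exact hvc s hs
      · rw [mem_Gext_iff, T_extend]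
        exact hvg
    have hbwd : ∀ w ∈ distSet (Submodule.span F2
        ((extendL Q '' (G : Set (PauliSpace Q))) ∪ {Xop (some q) + Xop none, Zop none})),
        ∃ w2 ∈ distSet G, w2 ≤ w := by
      rintro w ⟨v', hvc, hvg, rfl⟩
      refine ⟨pwt (TL q v'), ⟨TL q v', ?_, ?_, rfl⟩, pwt_T_le q v'⟩
      · intro s hs
        rw [stabGext_eq, mem_pcent_map_phi] at hvc
        have hvs := hvc s hs
        rw [mul_comm (s q).2 (v' none).1] at hvs
        have hT : omegaF (TL q v') s = omegaF (resL v') s + (v' none).1 * (s q).2 := by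
          have hTe : TL q v' = resL v' + (v' none).1 • Xop q := rfl
          rw [hTe, omegaF_add_left, omegaF_smul_left, omegaF_comm (Xop q) s, omegaF_Xop]
        rw [hT]
        exact hvs
      · intro hmem
        exact hvg ((mem_Gext_iff G q v').mpr hmem)
    have hDne : (distSet G).Nonempty := ⟨pwt v0, v0, hv0c, hv0g, rfl⟩
    have hD'ne : (distSet (Submodule.span F2
        ((extendL Q '' (G : Set (PauliSpace Q))) ∪
          {Xop (some q) + Xop none, Zop none}))).Nonempty :=
      ⟨pwt v0, hfwd _ ⟨v0, hv0c, hv0g, rfl⟩⟩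
    apply le_antisymm
    · exact Nat.sInf_le (hfwd _ (Nat.sInf_mem hDne))
    · obtain ⟨w2, hw2, hle⟩ := hbwd _ (Nat.sInf_mem hD'ne)
      exact le_trans (Nat.sInf_le hw2) hle
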